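/- For an odd prime p and positive integer n with m = ⌊(n-1)/v(p)⌋, ord_p(∏_{i=1}^{n-1}(2^i - 1)) = ε(p)·m + (m - d_p(m))/(p - 1). -/

import Mathlib

def mersenneFact (m : ℕ) : ℕ := ∏ i ∈ Finset.Icc 1 m, (2 ^ i - 1)

noncomputable def wieferichExp (p : ℕ) : ℕ := (2 ^ orderOf (2 : ZMod p) - 1).factorization p

theorem padic_val_mersenne_fact (p : ℕ) (hp : p.Prime) (hodd : Odd p)
    (n : ℕ) (hn : 1 ≤ n) (m : ℕ) (hm : m = (n - 1) / orderOf (2 : ZMod p)) :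
    (mersenneFact (n - 1)).factorization p =
      wieferichExp p * m + (m - (Nat.digits p m).sum) / (p - 1) := by
  have hfact : Fact p.Prime := ⟨hp⟩
  set v := orderOf (2 : ZMod p) with hv
  set N := n - 1 with hN
  have hp2 : p ≠ 2 := by
    rintro rfl
    exact Nat.not_odd_iff_even.mpr even_two hodd
  have hpd2 : ¬ p ∣ 2 := fun h => hp2 ((Nat.prime_dvd_prime_iff_eq hp Nat.prime_two).mp h)
  have h2ne : (2 : ZMod p) ≠ 0 := by
    intro h
    apply hpd2
    rw [← Nat.cast_ofNat] at h
    exact (ZMod.natCast_eq_zero_iff 2 p).mp h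
  have hvpos : 0 < v := by
    apply (isOfFinOrder_iff_pow_eq_one.mpr ⟨p - 1, Nat.sub_pos_of_lt hp.one_lt, ?_⟩).orderOf_pos
    exact ZMod.pow_card_sub_one_eq_one h2ne
  -- divisibility criterion
  have hiff : ∀ i : ℕ, p ∣ 2 ^ i - 1 ↔ v ∣ i := by
    intro i
    rw [← ZMod.natCast_eq_zero_iff, Nat.cast_sub (Nat.one_le_two_pow)]
    push_cast
    rw [sub_eq_zero, ← orderOf_dvd_iff_pow_eq_one]
  have hpd2v : ¬ p ∣ 2 ^ v := fun h => hpd2 (hp.dvd_of_dvd_pow h)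
  have hdvdv : p ∣ 2 ^ v - 1 := (hiff v).mpr dvd_rfl
  have hwe : wieferichExp p = (2 ^ v - 1).factorization p := by rw [wieferichExp, ← hv]
  -- lifting the exponent
  have hLTE : ∀ j : ℕ, 0 < j →
      (2 ^ (v * j) - 1).factorization p = wieferichExp p + j.factorization p := by
    intro j hj
    have h := Nat.emultiplicity_pow_sub_pow hp hodd hdvdv hpd2v j
    rw [one_pow, ← pow_mul] at h
    have h1 : 0 < 2 ^ (v * j) - 1 := by
      have : 1 < 2 ^ (v * j) := Nat.one_lt_two_pow_iff.mpr (by positivity)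
      omega
    have h2 : 0 < 2 ^ v - 1 := by
      have : 1 < 2 ^ v := Nat.one_lt_two_pow_iff.mpr hvpos.ne'
      omega
    rw [← padicValNat_eq_emultiplicity h1.ne', ← padicValNat_eq_emultiplicity h2.ne',
      ← padicValNat_eq_emultiplicity hj.ne', ← Nat.cast_add, Nat.cast_inj] at h
    rw [Nat.factorization_def _ hp, h, hwe, Nat.factorization_def _ hp,
      Nat.factorization_def _ hp]
  have hne : ∀ i ∈ Finset.Icc 1 N, 2 ^ i - 1 ≠ 0 := by
    intro i hi
    have h1i : 1 ≤ i := (Finset.mem_Icc.mp hi).1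
    have : 1 < 2 ^ i := Nat.one_lt_two_pow_iff.mpr (by omega)
    omega
  have h1 : (mersenneFact N).factorization p
      = ∑ i ∈ Finset.Icc 1 N, (2 ^ i - 1).factorization p := by
    rw [mersenneFact, Nat.factorization_prod hne]
    simp [Finsupp.finset_sum_apply]
  have hside : ∀ i ∈ Finset.Icc 1 N, (2 ^ i - 1).factorization p ≠ 0 → v ∣ i := by
    intro i _ hne0
    exact (hiff i).mp (Nat.dvd_of_factorization_pos hne0)
  have himg : (Finset.Icc 1 N).filter (fun i => v ∣ i)
      = (Finset.Icc 1 m).image (fun j => v * j) := by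
    ext i
    simp only [Finset.mem_filter, Finset.mem_image, Finset.mem_Icc]
    constructor
    · rintro ⟨⟨h1i, h2i⟩, k, rfl⟩
      refine ⟨k, ⟨?_, ?_⟩, rfl⟩
      · rcases Nat.eq_zero_or_pos k with rfl | hk
        · simp at h1i
        · exact hk
      · rw [hm]
        exact Nat.le_div_iff_mul_le hvpos |>.mpr (by rwa [mul_comm])
    · rintro ⟨j, ⟨hj1, hj2⟩, rfl⟩
      refine ⟨⟨Nat.one_le_iff_ne_zero.mpr (by positivity), ?_⟩, j, rfl⟩
      rw [hm] at hj2
      have := (Nat.le_div_iff_mul_le hvpos).mp hj2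
      rwa [mul_comm] at this
  have hinj : ∀ x ∈ Finset.Icc 1 m, ∀ y ∈ Finset.Icc 1 m,
      v * x = v * y → x = y := fun x _ y _ h => Nat.eq_of_mul_eq_mul_left hvpos h
  have hfacsum : ∑ j ∈ Finset.Icc 1 m, (j.factorization p) = (Nat.factorial m).factorization p := by
    have hmf : Nat.factorial m = ∏ j ∈ Finset.Icc 1 m, j := by
      rw [← Finset.prod_Ico_id_eq_factorial, Finset.Ico_add_one_right_eq_Icc]
    rw [hmf, Nat.factorization_prod (fun j hj => by
      have := (Finset.mem_Icc.mp hj).1; omega)]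
    simp [Finsupp.finset_sum_apply]
  have hleg : (Nat.factorial m).factorization p = (m - (Nat.digits p m).sum) / (p - 1) := by
    rw [Nat.factorization_def _ hp]
    have := sub_one_mul_padicValNat_factorial (p := p) m
    have hppos : 0 < p - 1 := by have := hp.one_lt; omega
    rw [← this, mul_comm, Nat.mul_div_cancel _ hppos]
  calc (mersenneFact N).factorization p
      = ∑ i ∈ Finset.Icc 1 N, (2 ^ i - 1).factorization p := h1
    _ = ∑ i ∈ (Finset.Icc 1 N).filter (fun i => v ∣ i), (2 ^ i - 1).factorization p :=
        (Finset.sum_filter_of_ne hside).symm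
    _ = ∑ j ∈ Finset.Icc 1 m, (2 ^ (v * j) - 1).factorization p := by
        rw [himg, Finset.sum_image hinj]
    _ = ∑ j ∈ Finset.Icc 1 m, (wieferichExp p + j.factorization p) :=
        Finset.sum_congr rfl (fun j hj => hLTE j (Finset.mem_Icc.mp hj).1)
    _ = wieferichExp p * m + ∑ j ∈ Finset.Icc 1 m, j.factorization p := by
        rw [Finset.sum_add_distrib, Finset.sum_const, Nat.card_Icc, smul_eq_mul,
          Nat.add_sub_cancel, mul_comm]
    _ = wieferichExp p * m + (m - (Nat.digits p m).sum) / (p - 1) := by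
        rw [hfacsum, hleg]
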